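/- Let Σ_x ≻ O, let V be symmetric, and suppose Σ* attains min of Tr(V S) over O ⪯ S ⪯ Σ_x. Then for every symmetric Σ' with Σ* ⪯ Σ' ⪯ Σ_x, the minimum of Tr(V S) over Σ' ⪯ S ⪯ Σ_x is equal to Tr(V Σ'). In particular, every Σ' above the optimum is stable. -/
import Mathlib


open Matrix

/-- Lemma 5: if `Σ*` attains the minimum of `Tr(V S)` over `O ⪯ S ⪯ Σ_x`, then every
`Σ'` with `Σ* ⪯ Σ' ⪯ Σ_x` is stable: the minimum of `Tr(V S)` over `Σ' ⪯ S ⪯ Σ_x`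
equals `Tr(V Σ')`. -/
theorem stable_above_optimum {p : ℕ}
    (Sx V Sstar : Matrix (Fin p) (Fin p) ℝ) (hSx : Sx.PosDef) (hV : V.IsSymm)
    (hS : Sstar.PosSemidef) (hd : (Sx - Sstar).PosSemidef)
    (hmin : ∀ S : Matrix (Fin p) (Fin p) ℝ, S.PosSemidef → (Sx - S).PosSemidef →
      (V * Sstar).trace ≤ (V * S).trace)
    (S' : Matrix (Fin p) (Fin p) ℝ) (h1 : (S' - Sstar).PosSemidef)
    (h2 : (Sx - S').PosSemidef) :
    IsLeast {x : ℝ | ∃ S : Matrix (Fin p) (Fin p) ℝ,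
        (S - S').PosSemidef ∧ (Sx - S).PosSemidef ∧ x = (V * S).trace}
      ((V * S').trace) := by
  constructor
  · exact ⟨S', by simpa using Matrix.PosSemidef.zero, h2, rfl⟩
  · rintro x ⟨S, hS1, hS2, rfl⟩
    have hT1 : (Sstar + (S - S')).PosSemidef := hS.add hS1
    have hT2 : (Sx - (Sstar + (S - S'))).PosSemidef := by
      have : Sx - (Sstar + (S - S')) = (Sx - S) + (S' - Sstar) := by abel
      rw [this]; exact hS2.add h1
    have := hmin _ hT1 hT2
    have htr : (V * (Sstar + (S - S'))).trace
        = (V * Sstar).trace + ((V * S).trace - (V * S').trace) := by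
      rw [mul_add, mul_sub, trace_add, trace_sub]
    linarith [htr ▸ this]
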